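/- Let M be a graded submodule of H²_d ⊗ ℂ^r generated by homogeneous vector-valued polynomials f_1,…,f_k of degree m forming a stable generating set with constant C, and let P_n denote the orthogonal projection onto M_n^⊥ ⊆ H_n ⊗ ℂ^r, E_n the projection onto H_n ⊗ ℂ^r. Then there is a constant C' such that for all n ≥ m and all j, ‖P_n Z_j* (E_{n+1} − P_{n+1}E_{n+1})‖ ≤ C'(n+1)^{−1/2}. -/

import Mathlib

open MvPolynomial Finset

noncomputable section

/-- The ℓ¹ norm of a polynomial: the sum of absolute values of its coefficients. -/
def l1 {d : ℕ} (p : MvPolynomial (Fin d) ℂ) : ℝ :=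
  ∑ α ∈ p.support, ‖p.coeff α‖

/-- total degree |α| of a multi-index -/
def mdeg {d : ℕ} (α : Fin d →₀ ℕ) : ℕ := α.sum fun _ n => n

/-- Drury–Arveson weight  α!/|α|! -/
def daW {d : ℕ} (α : Fin d →₀ ℕ) : ℝ :=
  (∏ i, Nat.factorial (α i)) / Nat.factorial (mdeg α)

/-- Drury–Arveson inner product on polynomials -/
def daInner {d : ℕ} (p q : MvPolynomial (Fin d) ℂ) : ℂ :=
  ∑ α ∈ p.support ∪ q.support, (starRingEnd ℂ) (p.coeff α) * q.coeff α * (daW α : ℂ)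

/-- Drury–Arveson squared norm -/
def daNormSq {d : ℕ} (p : MvPolynomial (Fin d) ℂ) : ℝ :=
  ∑ α ∈ p.support, ‖p.coeff α‖ ^ 2 * daW α

/-- vector valued versions -/
def vInner {d r : ℕ} (p q : Fin r → MvPolynomial (Fin d) ℂ) : ℂ := ∑ t, daInner (p t) (q t)

def vNormSq {d r : ℕ} (p : Fin r → MvPolynomial (Fin d) ℂ) : ℝ := ∑ t, daNormSq (p t)

def vNorm {d r : ℕ} (p : Fin r → MvPolynomial (Fin d) ℂ) : ℝ := Real.sqrt (vNormSq p)

def vHomog {d r : ℕ} (p : Fin r → MvPolynomial (Fin d) ℂ) (n : ℕ) : Prop :=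
  ∀ t, (p t).IsHomogeneous n



namespace Stmt15Aux

variable {d : ℕ}

/-- multi-factorial -/
def ffac (α : Fin d →₀ ℕ) : ℕ := ∏ i, Nat.factorial (α i)

lemma ffac_pos (α : Fin d →₀ ℕ) : 0 < ffac α := Finset.prod_pos fun i _ => Nat.factorial_pos _

lemma ffac_add_single (γ : Fin d →₀ ℕ) (j : Fin d) :
    ffac (γ + Finsupp.single j 1) = (γ j + 1) * ffac γ := by
  unfold ffac
  rw [← Finset.mul_prod_erase _ _ (Finset.mem_univ j),
      ← Finset.mul_prod_erase _ (fun i => Nat.factorial (γ i)) (Finset.mem_univ j)]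
  rw [← mul_assoc]
  congr 1
  · simp [Nat.factorial_succ]
  · apply Finset.prod_congr rfl
    intro i hi
    have hne : i ≠ j := (Finset.mem_erase.1 hi).1
    simp [Finsupp.single_apply, hne.symm, hne]


lemma coordId (g g' a : ℕ) :
    ∑ w ∈ Finset.range (min g g' + 1),
      (if g' - w ≤ a then
        ((Nat.factorial g * Nat.factorial g' * Nat.factorial a * Nat.factorial (g + a - g') : ℝ) /
          (Nat.factorial w * Nat.factorial (g-w) * Nat.factorial (g'-w) * Nat.factorial (a-(g'-w))))
        else 0)
    = if g' ≤ g + a then ((Nat.factorial (g + a) : ℝ)) else 0 := by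
  by_cases h : g' ≤ g + a
  · rw [if_pos h]
    have key : ∀ w ∈ Finset.range (min g g' + 1),
        (if g' - w ≤ a then
          ((Nat.factorial g * Nat.factorial g' * Nat.factorial a * Nat.factorial (g + a - g') : ℝ) /
            (Nat.factorial w * Nat.factorial (g-w) * Nat.factorial (g'-w) * Nat.factorial (a-(g'-w))))
          else 0)
        = ((g.choose w * a.choose (g' - w) * Nat.factorial g' * Nat.factorial (g + a - g') : ℕ) : ℝ) := by
      intro w hw
      have hwg : w ≤ g := by simp at hw; omega
      have hwg' : w ≤ g' := by simp at hw; omega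
      by_cases hga : g' - w ≤ a
      · rw [if_pos hga]
        have h1 : g.choose w * Nat.factorial w * Nat.factorial (g - w) = Nat.factorial g :=
          Nat.choose_mul_factorial_mul_factorial hwg
        have h2 : a.choose (g'-w) * Nat.factorial (g'-w) * Nat.factorial (a - (g'-w)) = Nat.factorial a :=
          Nat.choose_mul_factorial_mul_factorial hga
        have e1 : (Nat.factorial g : ℝ) = (g.choose w : ℝ) * Nat.factorial w * Nat.factorial (g-w) := by
          exact_mod_cast h1.symm
        have e2 : (Nat.factorial a : ℝ) = (a.choose (g'-w) : ℝ) * Nat.factorial (g'-w) * Nat.factorial (a-(g'-w)) := by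
          exact_mod_cast h2.symm
        rw [e1, e2]
        push_cast
        have n1 : (Nat.factorial w : ℝ) ≠ 0 := by exact_mod_cast (Nat.factorial_pos w).ne'
        have n2 : (Nat.factorial (g-w) : ℝ) ≠ 0 := by exact_mod_cast (Nat.factorial_pos _).ne'
        have n3 : (Nat.factorial (g'-w) : ℝ) ≠ 0 := by exact_mod_cast (Nat.factorial_pos _).ne'
        have n4 : (Nat.factorial (a-(g'-w)) : ℝ) ≠ 0 := by exact_mod_cast (Nat.factorial_pos _).ne'
        field_simp
      · rw [if_neg hga]
        have : a.choose (g'-w) = 0 := Nat.choose_eq_zero_of_lt (by omega)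
        simp [this]
    rw [Finset.sum_congr rfl key, ← Nat.cast_sum]
    have extend : ∑ w ∈ Finset.range (min g g' + 1),
        (g.choose w * a.choose (g' - w) * Nat.factorial g' * Nat.factorial (g + a - g'))
        = ∑ w ∈ Finset.range (g' + 1),
        (g.choose w * a.choose (g' - w) * Nat.factorial g' * Nat.factorial (g + a - g')) := by
      apply Finset.sum_subset
      · intro w hw; simp at hw ⊢; omega
      · intro w hw hnw
        simp at hw hnw
        have : g < w := by omega
        simp [Nat.choose_eq_zero_of_lt this]
    rw [extend]
    have vander : ∑ w ∈ Finset.range (g' + 1), g.choose w * a.choose (g' - w) = (g + a).choose g' := by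
      rw [Nat.add_choose_eq]
      rw [Finset.Nat.sum_antidiagonal_eq_sum_range_succ_mk]
    have : ∑ w ∈ Finset.range (g' + 1),
        (g.choose w * a.choose (g' - w) * Nat.factorial g' * Nat.factorial (g + a - g'))
        = (g + a).choose g' * Nat.factorial g' * Nat.factorial (g + a - g') := by
      rw [← Finset.sum_mul, ← Finset.sum_mul, vander]
    rw [this, Nat.choose_mul_factorial_mul_factorial h]
  · rw [if_neg h]
    apply Finset.sum_eq_zero
    intro w hw
    simp only [Finset.mem_range] at hw
    rw [if_neg (by omega)]

lemma fscoe (x : Fin d → ℕ) (i : Fin d) : (Finsupp.equivFunOnFinite.symm x) i = x i := rfl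

lemma prod_ite_all {ι : Type*} [Fintype ι] (P : ι → Prop) [DecidablePred P] [Decidable (∀ i, P i)]
    (x : ι → ℝ) :
    (if (∀ i, P i) then ∏ i, x i else 0) = ∏ i, (if P i then x i else 0) := by
  by_cases h : ∀ i, P i
  · rw [if_pos h]; exact Finset.prod_congr rfl fun i _ => (if_pos (h i)).symm
  · rw [if_neg h]
    obtain ⟨i, hi⟩ := not_forall.1 h
    exact (Finset.prod_eq_zero (Finset.mem_univ i)
      (if_neg hi : (if P i then x i else 0) = 0)).symm

lemma sum_Iic_piFinset (μ : Fin d →₀ ℕ) (F : (Fin d →₀ ℕ) → ℝ) :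
    ∑ β ∈ Finset.Iic μ, F β
      = ∑ x ∈ Fintype.piFinset (fun i => Finset.range (μ i + 1)), F (Finsupp.equivFunOnFinite.symm x) := by
  apply Finset.sum_nbij' (fun (β : Fin d →₀ ℕ) => (β : Fin d → ℕ))
    (fun x => Finsupp.equivFunOnFinite.symm x)
  · intro β hβ
    simp only [Finset.mem_Iic] at hβ
    simp only [Fintype.mem_piFinset, Finset.mem_range]
    intro i; exact Nat.lt_succ_of_le (hβ i)
  · intro x hx
    simp only [Fintype.mem_piFinset, Finset.mem_range] at hx
    simp only [Finset.mem_Iic]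
    intro i
    rw [fscoe]
    exact Nat.lt_succ_iff.1 (hx i)
  · intro β _; exact Finsupp.equivFunOnFinite.symm_apply_apply β
  · intro x _; ext i; rw [fscoe]
  · intro β _
    congr 1
    ext i
    rfl

noncomputable def frac (γ γ' α β : Fin d →₀ ℕ) : ℝ :=
  (ffac γ * ffac γ' * ffac α * ffac (γ + α - γ') : ℝ) /
    (ffac β * ffac (γ - β) * ffac (γ' - β) * ffac (α - (γ' - β)))

lemma scalarId (γ γ' α : Fin d →₀ ℕ) (B : Finset (Fin d →₀ ℕ)) (hB : Finset.Iic (γ ⊓ γ') ⊆ B) :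
    (if γ' ≤ γ + α then ((ffac (γ + α) : ℝ)) else 0)
    = ∑ β ∈ B, (if β ≤ γ ∧ β ≤ γ' ∧ γ' - β ≤ α then frac γ γ' α β else 0) := by
  have step1 : ∑ β ∈ B, (if β ≤ γ ∧ β ≤ γ' ∧ γ' - β ≤ α then frac γ γ' α β else 0)
      = ∑ β ∈ Finset.Iic (γ ⊓ γ'), (if β ≤ γ ∧ β ≤ γ' ∧ γ' - β ≤ α then frac γ γ' α β else 0) := by
    symm
    apply Finset.sum_subset hB
    intro β _ hβ
    simp only [Finset.mem_Iic, le_inf_iff, not_and_or] at hβ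
    rcases hβ with h1 | h1
    · rw [if_neg (by tauto)]
    · rw [if_neg (by tauto)]
  rw [step1, sum_Iic_piFinset]
  have step2 : ∀ x ∈ Fintype.piFinset (fun i => Finset.range ((γ ⊓ γ') i + 1)),
      (if (Finsupp.equivFunOnFinite.symm x) ≤ γ ∧ (Finsupp.equivFunOnFinite.symm x) ≤ γ'
          ∧ γ' - (Finsupp.equivFunOnFinite.symm x) ≤ α
        then frac γ γ' α (Finsupp.equivFunOnFinite.symm x) else 0)
      = ∏ i, (if γ' i - x i ≤ α i then
          ((Nat.factorial (γ i) * Nat.factorial (γ' i) * Nat.factorial (α i) * Nat.factorial (γ i + α i - γ' i) : ℝ) /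
            (Nat.factorial (x i) * Nat.factorial (γ i - x i) * Nat.factorial (γ' i - x i)
              * Nat.factorial (α i - (γ' i - x i))))
          else 0) := by
    intro x hx
    simp only [Fintype.mem_piFinset, Finset.mem_range] at hx
    have hx1 : (Finsupp.equivFunOnFinite.symm x : Fin d →₀ ℕ) ≤ γ := by
      rw [Finsupp.le_def]; intro i; rw [fscoe]
      have := Nat.lt_succ_iff.1 (hx i)
      simp only [Finsupp.inf_apply] at this; omega
    have hx2 : (Finsupp.equivFunOnFinite.symm x : Fin d →₀ ℕ) ≤ γ' := by
      rw [Finsupp.le_def]; intro i; rw [fscoe]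
      have := Nat.lt_succ_iff.1 (hx i)
      simp only [Finsupp.inf_apply] at this; omega
    have cond : ((Finsupp.equivFunOnFinite.symm x : Fin d →₀ ℕ) ≤ γ ∧ (Finsupp.equivFunOnFinite.symm x) ≤ γ'
          ∧ γ' - (Finsupp.equivFunOnFinite.symm x) ≤ α) ↔ (∀ i, γ' i - x i ≤ α i) := by
      constructor
      · rintro ⟨-, -, h3⟩ i
        have := Finsupp.le_def.1 h3 i
        simpa [Finsupp.tsub_apply, fscoe] using this
      · intro hall
        refine ⟨hx1, hx2, ?_⟩
        rw [Finsupp.le_def]; intro i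
        rw [Finsupp.tsub_apply, fscoe]
        exact hall i
    rw [if_congr cond rfl rfl]
    have fracEq : frac γ γ' α (Finsupp.equivFunOnFinite.symm x)
        = ∏ i, ((Nat.factorial (γ i) * Nat.factorial (γ' i) * Nat.factorial (α i) * Nat.factorial (γ i + α i - γ' i) : ℝ) /
            (Nat.factorial (x i) * Nat.factorial (γ i - x i) * Nat.factorial (γ' i - x i)
              * Nat.factorial (α i - (γ' i - x i)))) := by
      unfold frac ffac
      push_cast
      rw [← Finset.prod_mul_distrib, ← Finset.prod_mul_distrib, ← Finset.prod_mul_distrib,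
          ← Finset.prod_mul_distrib, ← Finset.prod_mul_distrib, ← Finset.prod_mul_distrib,
          ← Finset.prod_div_distrib]
      apply Finset.prod_congr rfl
      intro i _
      simp [fscoe]
    rw [fracEq]
    exact prod_ite_all (fun i => γ' i - x i ≤ α i) _
  rw [Finset.sum_congr rfl step2]
  rw [← Finset.prod_univ_sum (fun i => Finset.range ((γ ⊓ γ') i + 1))
      (fun i w => (if γ' i - w ≤ α i then
          ((Nat.factorial (γ i) * Nat.factorial (γ' i) * Nat.factorial (α i) * Nat.factorial (γ i + α i - γ' i) : ℝ) /
            (Nat.factorial w * Nat.factorial (γ i - w) * Nat.factorial (γ' i - w)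
              * Nat.factorial (α i - (γ' i - w))))
          else 0))]
  have step3 : ∀ i : Fin d, ∑ w ∈ Finset.range ((γ ⊓ γ') i + 1),
      (if γ' i - w ≤ α i then
          ((Nat.factorial (γ i) * Nat.factorial (γ' i) * Nat.factorial (α i) * Nat.factorial (γ i + α i - γ' i) : ℝ) /
            (Nat.factorial w * Nat.factorial (γ i - w) * Nat.factorial (γ' i - w)
              * Nat.factorial (α i - (γ' i - w))))
          else 0)
      = if γ' i ≤ γ i + α i then ((Nat.factorial (γ i + α i) : ℝ)) else 0 := by
    intro i
    have h : (γ ⊓ γ') i = min (γ i) (γ' i) := by simp [Finsupp.inf_apply]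
    rw [h]
    exact coordId (γ i) (γ' i) (α i)
  rw [Finset.prod_congr rfl (fun i _ => step3 i)]
  rw [← prod_ite_all (fun i => γ' i ≤ γ i + α i) (fun i => (Nat.factorial (γ i + α i) : ℝ))]
  have condEq : (γ' ≤ γ + α) ↔ (∀ i, γ' i ≤ γ i + α i) := by
    rw [Finsupp.le_def]
    constructor <;> intro h i <;> have := h i <;> simpa [Finsupp.add_apply] using this
  rw [if_congr condEq rfl rfl]
  by_cases h : ∀ i, γ' i ≤ γ i + α i
  · rw [if_pos h, if_pos h]
    unfold ffac; push_cast
    apply Finset.prod_congr rfl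
    intro i _
    simp
  · rw [if_neg h, if_neg h]



def fN2 (p : MvPolynomial (Fin d) ℂ) : ℝ :=
  ∑ α ∈ p.support, Complex.normSq (p.coeff α) * ffac α

lemma fN2_nonneg (p : MvPolynomial (Fin d) ℂ) : 0 ≤ fN2 p :=
  Finset.sum_nonneg fun α _ => mul_nonneg (Complex.normSq_nonneg _) (Nat.cast_nonneg _)

lemma fN2_eq_superset {p : MvPolynomial (Fin d) ℂ} {S : Finset (Fin d →₀ ℕ)}
    (hS : p.support ⊆ S) :
    fN2 p = ∑ α ∈ S, Complex.normSq (p.coeff α) * ffac α := by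
  apply Finset.sum_subset hS
  intro α _ hα
  rw [MvPolynomial.notMem_support_iff.1 hα]
  simp

def tco (f b : MvPolynomial (Fin d) ℂ) (β δ : Fin d →₀ ℕ) : ℂ :=
  ∑ γ ∈ f.support, if β ≤ γ then
    (starRingEnd ℂ) (f.coeff γ) * b.coeff (δ + (γ - β)) *
      (((ffac γ : ℂ) * (ffac (δ + (γ - β)) : ℂ)) / ((ffac (γ - β) : ℂ) * (ffac δ : ℂ)))
    else 0

def FQ (S : Finset (Fin d →₀ ℕ)) (c : (Fin d →₀ ℕ) → ℂ) : ℝ :=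
  ∑ δ ∈ S, Complex.normSq (c δ) * ffac δ

lemma FQ_nonneg (S : Finset (Fin d →₀ ℕ)) (c : (Fin d →₀ ℕ) → ℂ) : 0 ≤ FQ S c :=
  Finset.sum_nonneg fun δ _ => mul_nonneg (Complex.normSq_nonneg _) (Nat.cast_nonneg _)

def SS (f b : MvPolynomial (Fin d) ℂ) (β : Fin d →₀ ℕ) : Finset (Fin d →₀ ℕ) :=
  (f.support ×ˢ b.support).image (fun p => p.2 - (p.1 - β))

lemma tco_eq_zero_of_not_mem_SS {f b : MvPolynomial (Fin d) ℂ} {β δ : Fin d →₀ ℕ}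
    (h : δ ∉ SS f b β) : tco f b β δ = 0 := by
  apply Finset.sum_eq_zero
  intro γ hγ
  by_cases hβγ : β ≤ γ
  · rw [if_pos hβγ]
    have hb : b.coeff (δ + (γ - β)) = 0 := by
      by_contra hb
      apply h
      simp only [SS, Finset.mem_image, Finset.mem_product]
      exact ⟨(γ, δ + (γ - β)), ⟨hγ, MvPolynomial.mem_support_iff.2 hb⟩, add_tsub_cancel_left (γ - β) δ ▸ (add_tsub_cancel_right δ (γ - β))⟩
    rw [hb]; ring
  · rw [if_neg hβγ]

lemma FQ_congr {S S' : Finset (Fin d →₀ ℕ)} {c : (Fin d →₀ ℕ) → ℂ}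
    (h : ∀ δ ∉ S, c δ = 0) (h' : ∀ δ ∉ S', c δ = 0) : FQ S c = FQ S' c := by
  have key : ∀ T T' : Finset (Fin d →₀ ℕ), (∀ δ ∉ T', c δ = 0) → T' ⊆ T → FQ T c = FQ T' c := by
    intro T T' hz hs
    symm
    apply Finset.sum_subset hs
    intro δ _ hδ
    rw [hz δ hδ]; simp
  rw [key (S ∪ S') S h (Finset.subset_union_left) |>.symm,
      key (S ∪ S') S' h' (Finset.subset_union_right)]

-- helper
lemma mulIte (z : ℂ) (c : Prop) [Decidable c] (r : ℝ) :
    (if c then z * (r:ℂ) else 0) = z * ((if c then r else 0 : ℝ) : ℂ) := by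
  by_cases h : c <;> simp [h]

lemma coeff_expand (b : MvPolynomial (Fin d) ℂ) (X : Fin d →₀ ℕ) :
    b.coeff X = ∑ α ∈ b.support, (if X = α then b.coeff α else 0) := by
  rw [Finset.sum_ite_eq]
  by_cases h : X ∈ b.support
  · rw [if_pos h]
  · rw [if_neg h, MvPolynomial.notMem_support_iff.1 h]

lemma sumCollapse {S : Finset (Fin d →₀ ℕ)} {x α : Fin d →₀ ℕ} (G : (Fin d →₀ ℕ) → ℂ)
    (hmem : x ≤ α → α - x ∈ S) :
    ∑ δ ∈ S, (if δ + x = α then G δ else 0) = if x ≤ α then G (α - x) else 0 := by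
  by_cases h : x ≤ α
  · rw [if_pos h]
    have conv : ∀ δ ∈ S, (if δ + x = α then G δ else 0) = (if δ = α - x then G δ else 0) := by
      intro δ _
      apply if_congr _ rfl rfl
      constructor
      · intro he; rw [← he, add_tsub_cancel_right]
      · intro he; rw [he, tsub_add_cancel_of_le h]
    rw [Finset.sum_congr rfl conv, Finset.sum_ite_eq' S (α - x) G, if_pos (hmem h)]
  · rw [if_neg h]
    apply Finset.sum_eq_zero
    intro δ _
    rw [if_neg]
    intro he
    exact h (he ▸ le_add_self)

lemma coeff_mul_eq (f b : MvPolynomial (Fin d) ℂ) (s : Fin d →₀ ℕ) :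
    (f * b).coeff s = ∑ γ' ∈ f.support, (if γ' ≤ s then f.coeff γ' * b.coeff (s - γ') else 0) := by
  conv_lhs => rw [f.as_sum, Finset.sum_mul]
  rw [MvPolynomial.coeff_sum]
  exact Finset.sum_congr rfl fun γ' _ => MvPolynomial.coeff_monomial_mul' s γ' _ b

lemma re_ofReal_mul' (r : ℝ) (z : ℂ) : ((r : ℂ) * z).re = r * z.re := by
  simp

lemma conj_mul_self_re (z : ℂ) (N : ℕ) :
    ((starRingEnd ℂ) z * z * ((N : ℝ) : ℂ)).re = Complex.normSq z * N := by
  have h : (starRingEnd ℂ) z * z = (Complex.normSq z : ℂ) := by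
    rw [mul_comm, Complex.mul_conj]
  rw [h, ← Complex.ofReal_mul, Complex.ofReal_re]

lemma sum_rot {A B C E : Type*} (sa : Finset A) (sb : Finset B) (sc : Finset C) (se : Finset E)
    (F : A → B → C → E → ℂ) :
    ∑ a ∈ sa, ∑ b ∈ sb, ∑ c ∈ sc, ∑ e ∈ se, F a b c e
    = ∑ e ∈ se, ∑ c ∈ sc, ∑ a ∈ sa, ∑ b ∈ sb, F a b c e := by
  trans ∑ a ∈ sa, ∑ e ∈ se, ∑ c ∈ sc, ∑ b ∈ sb, F a b c e
  · refine Finset.sum_congr rfl fun a _ => ?_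
    trans ∑ c ∈ sc, ∑ b ∈ sb, ∑ e ∈ se, F a b c e
    · exact Finset.sum_comm
    trans ∑ c ∈ sc, ∑ e ∈ se, ∑ b ∈ sb, F a b c e
    · exact Finset.sum_congr rfl fun c _ => Finset.sum_comm
    · exact Finset.sum_comm
  · trans ∑ e ∈ se, ∑ a ∈ sa, ∑ c ∈ sc, ∑ b ∈ sb, F a b c e
    · exact Finset.sum_comm
    · exact Finset.sum_congr rfl fun e _ => Finset.sum_comm

def canonT (f b : MvPolynomial (Fin d) ℂ) (γ γ' α β : Fin d →₀ ℕ) : ℂ :=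
  if β ≤ γ ∧ β ≤ γ' ∧ γ' - β ≤ α then
    (starRingEnd ℂ) (f.coeff γ * b.coeff α) * (f.coeff γ' * b.coeff (γ + α - γ'))
      * ((frac γ γ' α β : ℝ) : ℂ)
  else 0

lemma fock_L (f b : MvPolynomial (Fin d) ℂ) (B : Finset (Fin d →₀ ℕ))
    (hB : ∀ γ ∈ f.support, Finset.Iic γ ⊆ B) :
    fN2 (f * b)
      = (∑ γ ∈ f.support, ∑ α ∈ b.support, ∑ γ' ∈ f.support, ∑ β ∈ B, canonT f b γ γ' α β).re := by
  classical
  set E : Finset (Fin d →₀ ℕ) := (f.support ×ˢ b.support).image (fun p => p.1 + p.2) with hE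
  have hsupp : (f * b).support ⊆ E := by
    intro s hs
    have h1 := MvPolynomial.support_mul f b hs
    rw [Finset.mem_add] at h1
    obtain ⟨u, hu, v, hv, rfl⟩ := h1
    exact Finset.mem_image.2 ⟨(u, v), Finset.mem_product.2 ⟨hu, hv⟩, rfl⟩
  rw [fN2_eq_superset hsupp]
  have step1 : ∀ ε ∈ E, Complex.normSq ((f*b).coeff ε) * (ffac ε : ℝ)
      = ((starRingEnd ℂ) ((f*b).coeff ε) * ((f*b).coeff ε) * ((ffac ε : ℝ) : ℂ)).re := by
    intro ε _
    rw [conj_mul_self_re]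
  rw [Finset.sum_congr rfl step1, ← Complex.re_sum]
  have conjc : ∀ ε : Fin d →₀ ℕ, (starRingEnd ℂ) ((f*b).coeff ε)
      = ∑ p ∈ f.support ×ˢ b.support,
          (if p.1 + p.2 = ε then (starRingEnd ℂ) (f.coeff p.1 * b.coeff p.2) else 0) := by
    intro ε
    rw [MvPolynomial.coeff_mul, map_sum, ← Finset.sum_filter]
    symm
    apply Finset.sum_subset
    · intro p hp
      rw [Finset.HasAntidiagonal.mem_antidiagonal]
      exact (Finset.mem_filter.1 hp).2
    · intro x hx hnx
      have hxe : x.1 + x.2 = ε := Finset.HasAntidiagonal.mem_antidiagonal.1 hx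
      have hout : x.1 ∉ f.support ∨ x.2 ∉ b.support := by
        by_contra hcon
        push_neg at hcon
        exact hnx (Finset.mem_filter.2 ⟨Finset.mem_product.2 ⟨hcon.1, hcon.2⟩, hxe⟩)
      rcases hout with h | h
      · rw [MvPolynomial.notMem_support_iff.1 h]; simp
      · rw [MvPolynomial.notMem_support_iff.1 h]; simp
  have step2 : ∑ ε ∈ E, ((starRingEnd ℂ) ((f*b).coeff ε) * ((f*b).coeff ε) * ((ffac ε : ℝ) : ℂ))
      = ∑ p ∈ f.support ×ˢ b.support,
          (starRingEnd ℂ) (f.coeff p.1 * b.coeff p.2) *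
            ((f*b).coeff (p.1+p.2) * ((ffac (p.1+p.2) : ℝ) : ℂ)) := by
    have e1 : ∀ ε ∈ E, (starRingEnd ℂ) ((f*b).coeff ε) * ((f*b).coeff ε) * ((ffac ε : ℝ) : ℂ)
        = ∑ p ∈ f.support ×ˢ b.support,
            (if p.1 + p.2 = ε then
              (starRingEnd ℂ) (f.coeff p.1 * b.coeff p.2) * ((f*b).coeff ε * ((ffac ε : ℝ) : ℂ))
            else 0) := by
      intro ε _
      rw [mul_assoc, conjc ε, Finset.sum_mul]
      refine Finset.sum_congr rfl fun p _ => ?_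
      rw [ite_mul, zero_mul]
    rw [Finset.sum_congr rfl e1, Finset.sum_comm]
    refine Finset.sum_congr rfl fun p hp => ?_
    rw [Finset.sum_ite_eq E (p.1+p.2)
      (fun ε => (starRingEnd ℂ) (f.coeff p.1 * b.coeff p.2) * ((f*b).coeff ε * ((ffac ε : ℝ) : ℂ)))]
    rw [if_pos (Finset.mem_image.2 ⟨p, hp, rfl⟩)]
  rw [step2]
  congr 1
  rw [Finset.sum_product]
  refine Finset.sum_congr rfl fun γ hγ => ?_
  refine Finset.sum_congr rfl fun α hα => ?_
  rw [coeff_mul_eq f b (γ + α), Finset.sum_mul, Finset.mul_sum]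
  refine Finset.sum_congr rfl fun γ' hγ' => ?_
  have hBγ : Finset.Iic (γ ⊓ γ') ⊆ B :=
    subset_trans (Finset.Iic_subset_Iic.2 inf_le_left) (hB γ hγ)
  have lhs_eq : (starRingEnd ℂ) (f.coeff γ * b.coeff α) *
      ((if γ' ≤ γ + α then f.coeff γ' * b.coeff (γ + α - γ') else 0) * ((ffac (γ+α) : ℝ) : ℂ))
      = ((starRingEnd ℂ) (f.coeff γ * b.coeff α) * (f.coeff γ' * b.coeff (γ + α - γ'))) *
          (((if γ' ≤ γ + α then ((ffac (γ+α) : ℝ)) else 0) : ℝ) : ℂ) := by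
    by_cases h : γ' ≤ γ + α
    · rw [if_pos h, if_pos h]; ring
    · rw [if_neg h, if_neg h]; simp
  rw [lhs_eq, scalarId γ γ' α B hBγ]
  have cast_sum : (((∑ β ∈ B, (if β ≤ γ ∧ β ≤ γ' ∧ γ' - β ≤ α then frac γ γ' α β else 0)) : ℝ) : ℂ)
      = ∑ β ∈ B, (((if β ≤ γ ∧ β ≤ γ' ∧ γ' - β ≤ α then frac γ γ' α β else 0) : ℝ) : ℂ) := by
    push_cast
    rfl
  rw [cast_sum, Finset.mul_sum]
  refine Finset.sum_congr rfl fun β _ => ?_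
  unfold canonT
  by_cases h : β ≤ γ ∧ β ≤ γ' ∧ γ' - β ≤ α
  · rw [if_pos h, if_pos h]
  · rw [if_neg h, if_neg h]
    simp

lemma conj_tco (f b : MvPolynomial (Fin d) ℂ) (β δ : Fin d →₀ ℕ) :
    (starRingEnd ℂ) (tco f b β δ)
      = ∑ c ∈ f.support, (if β ≤ c then
          f.coeff c * (starRingEnd ℂ) (b.coeff (δ + (c - β))) *
            (((ffac c : ℂ) * (ffac (δ + (c - β)) : ℂ)) / ((ffac (c - β) : ℂ) * (ffac δ : ℂ)))
          else 0) := by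
  unfold tco
  rw [map_sum]
  refine Finset.sum_congr rfl fun c _ => ?_
  rw [apply_ite (starRingEnd ℂ), map_zero]
  by_cases h : β ≤ c
  · rw [if_pos h, if_pos h]
    simp [map_mul, map_div₀, map_natCast, Complex.conj_conj]
  · rw [if_neg h, if_neg h]

lemma conj_coeff_expand (b : MvPolynomial (Fin d) ℂ) (X : Fin d →₀ ℕ) :
    (starRingEnd ℂ) (b.coeff X)
      = ∑ α ∈ b.support, (if X = α then (starRingEnd ℂ) (b.coeff α) else 0) := by
  conv_lhs => rw [coeff_expand b X]
  rw [map_sum]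
  refine Finset.sum_congr rfl fun α _ => ?_
  rw [apply_ite (starRingEnd ℂ), map_zero]

lemma fock_R (f b : MvPolynomial (Fin d) ℂ) (B : Finset (Fin d →₀ ℕ)) :
    ∑ β ∈ B, ((ffac β : ℝ))⁻¹ * FQ (SS f b β) (tco f b β)
      = (∑ β ∈ B, ∑ γ' ∈ f.support, ∑ γ ∈ f.support, ∑ α ∈ b.support, canonT f b γ γ' α β).re := by
  classical
  have main : ∀ β ∈ B, ((ffac β : ℝ))⁻¹ * FQ (SS f b β) (tco f b β)
      = (∑ γ' ∈ f.support, ∑ γ ∈ f.support, ∑ α ∈ b.support, canonT f b γ γ' α β).re := by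
    intro β _
    have hFQ : FQ (SS f b β) (tco f b β)
        = (∑ δ ∈ SS f b β,
            (starRingEnd ℂ) (tco f b β δ) * tco f b β δ * ((ffac δ : ℝ) : ℂ)).re := by
      unfold FQ
      rw [Complex.re_sum]
      exact Finset.sum_congr rfl fun δ _ => (conj_mul_self_re _ _).symm
    rw [hFQ, ← re_ofReal_mul']
    congr 1
    -- complex identity
    rw [Finset.mul_sum]
    -- expand the product of two sums
    have expand : ∀ δ ∈ SS f b β,
        ((((ffac β : ℝ))⁻¹ : ℝ) : ℂ) *
          ((starRingEnd ℂ) (tco f b β δ) * tco f b β δ * ((ffac δ : ℝ) : ℂ))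
        = ∑ c ∈ f.support, ∑ c' ∈ f.support,
            ((((ffac β : ℝ))⁻¹ : ℝ) : ℂ) *
            ((if β ≤ c then
                f.coeff c * (starRingEnd ℂ) (b.coeff (δ + (c - β))) *
                  (((ffac c : ℂ) * (ffac (δ + (c - β)) : ℂ)) / ((ffac (c - β) : ℂ) * (ffac δ : ℂ)))
                else 0) *
             (if β ≤ c' then
                (starRingEnd ℂ) (f.coeff c') * b.coeff (δ + (c' - β)) *
                  (((ffac c' : ℂ) * (ffac (δ + (c' - β)) : ℂ)) / ((ffac (c' - β) : ℂ) * (ffac δ : ℂ)))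
                else 0) * ((ffac δ : ℝ) : ℂ)) := by
      intro δ _
      rw [conj_tco]
      conv_lhs => rw [tco]
      rw [Finset.sum_mul_sum]
      simp only [Finset.sum_mul, Finset.mul_sum]
      try refine Finset.sum_congr rfl fun c _ => Finset.sum_congr rfl fun c' _ => by ring
    rw [Finset.sum_congr rfl expand]
    -- swap δ outside-in: ∑_δ∑_c∑_c' → ∑_c∑_c'∑_δ
    rw [Finset.sum_comm]
    have swap2 : ∀ c ∈ f.support,
        (∑ δ ∈ SS f b β, ∑ c' ∈ f.support, (((((ffac β : ℝ))⁻¹ : ℝ) : ℂ) *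
            ((if β ≤ c then
                f.coeff c * (starRingEnd ℂ) (b.coeff (δ + (c - β))) *
                  (((ffac c : ℂ) * (ffac (δ + (c - β)) : ℂ)) / ((ffac (c - β) : ℂ) * (ffac δ : ℂ)))
                else 0) *
             (if β ≤ c' then
                (starRingEnd ℂ) (f.coeff c') * b.coeff (δ + (c' - β)) *
                  (((ffac c' : ℂ) * (ffac (δ + (c' - β)) : ℂ)) / ((ffac (c' - β) : ℂ) * (ffac δ : ℂ)))
                else 0) * ((ffac δ : ℝ) : ℂ))))
        = ∑ c' ∈ f.support, ∑ δ ∈ SS f b β, (((((ffac β : ℝ))⁻¹ : ℝ) : ℂ) *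
            ((if β ≤ c then
                f.coeff c * (starRingEnd ℂ) (b.coeff (δ + (c - β))) *
                  (((ffac c : ℂ) * (ffac (δ + (c - β)) : ℂ)) / ((ffac (c - β) : ℂ) * (ffac δ : ℂ)))
                else 0) *
             (if β ≤ c' then
                (starRingEnd ℂ) (f.coeff c') * b.coeff (δ + (c' - β)) *
                  (((ffac c' : ℂ) * (ffac (δ + (c' - β)) : ℂ)) / ((ffac (c' - β) : ℂ) * (ffac δ : ℂ)))
                else 0) * ((ffac δ : ℝ) : ℂ))) := by
      intro c _
      exact Finset.sum_comm
    rw [Finset.sum_congr rfl swap2]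
    -- now per (c, c')
    refine Finset.sum_congr rfl fun c hc => ?_
    refine Finset.sum_congr rfl fun c' hc' => ?_
    by_cases hcc : β ≤ c ∧ β ≤ c'
    · obtain ⟨h1, h2⟩ := hcc
      -- rewrite each δ-term into an α-sum
      have perδ : ∀ δ ∈ SS f b β, ((((ffac β : ℝ))⁻¹ : ℝ) : ℂ) *
            ((if β ≤ c then
                f.coeff c * (starRingEnd ℂ) (b.coeff (δ + (c - β))) *
                  (((ffac c : ℂ) * (ffac (δ + (c - β)) : ℂ)) / ((ffac (c - β) : ℂ) * (ffac δ : ℂ)))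
                else 0) *
             (if β ≤ c' then
                (starRingEnd ℂ) (f.coeff c') * b.coeff (δ + (c' - β)) *
                  (((ffac c' : ℂ) * (ffac (δ + (c' - β)) : ℂ)) / ((ffac (c' - β) : ℂ) * (ffac δ : ℂ)))
                else 0) * ((ffac δ : ℝ) : ℂ))
          = ∑ α ∈ b.support, (if δ + (c - β) = α then
              ((((ffac β : ℝ))⁻¹ : ℝ) : ℂ) *
              (f.coeff c * (starRingEnd ℂ) (b.coeff α) *
                  (((ffac c : ℂ) * (ffac (δ + (c - β)) : ℂ)) / ((ffac (c - β) : ℂ) * (ffac δ : ℂ))) *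
               ((starRingEnd ℂ) (f.coeff c') * b.coeff (δ + (c' - β)) *
                  (((ffac c' : ℂ) * (ffac (δ + (c' - β)) : ℂ)) / ((ffac (c' - β) : ℂ) * (ffac δ : ℂ)))) *
               ((ffac δ : ℝ) : ℂ))
            else 0) := by
        intro δ _
        rw [if_pos h1, if_pos h2, conj_coeff_expand b (δ + (c - β))]
        simp only [Finset.mul_sum, Finset.sum_mul, ite_mul, mul_ite, zero_mul, mul_zero]
      rw [Finset.sum_congr rfl perδ, Finset.sum_comm]
      refine Finset.sum_congr rfl fun α hα => ?_
      have hmem : c - β ≤ α → α - (c - β) ∈ SS f b β := fun _ =>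
        Finset.mem_image.2 ⟨(c, α), Finset.mem_product.2 ⟨hc, hα⟩, rfl⟩
      rw [sumCollapse _ hmem]
      by_cases hle : c - β ≤ α
      · rw [if_pos hle]
        unfold canonT
        rw [if_pos ⟨h2, h1, hle⟩]
        have i1 : (α - (c - β)) + (c - β) = α := tsub_add_cancel_of_le hle
        have i2 : (α - (c - β)) + (c' - β) = c' + α - c := by
          ext i
          have j1 := Finsupp.le_def.1 h1 i
          have j2 := Finsupp.le_def.1 h2 i
          have j3 := Finsupp.le_def.1 hle i
          simp only [Finsupp.add_apply, Finsupp.tsub_apply] at j3 ⊢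
          omega
        rw [i1, i2, map_mul]
        unfold frac
        have nz : ∀ μ : Fin d →₀ ℕ, ((ffac μ : ℕ) : ℂ) ≠ 0 := by
          intro μ
          exact_mod_cast (ffac_pos μ).ne'
        have z1 := nz β
        have z2 := nz (c - β)
        have z3 := nz (c' - β)
        have z4 := nz (α - (c - β))
        push_cast
        field_simp
      · rw [if_neg hle]
        unfold canonT
        rw [if_neg (by tauto)]
    · rw [not_and_or] at hcc
      trans (0:ℂ)
      · apply Finset.sum_eq_zero
        intro δ _
        rcases hcc with h | h
        · rw [if_neg h]; simp only [zero_mul, mul_zero]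
        · rw [if_neg h]; simp only [zero_mul, mul_zero]
      · symm
        apply Finset.sum_eq_zero
        intro α _
        unfold canonT
        rw [if_neg (by tauto)]
  rw [Finset.sum_congr rfl main, ← Complex.re_sum]

lemma fock_id (f b : MvPolynomial (Fin d) ℂ) (B : Finset (Fin d →₀ ℕ))
    (hB : ∀ γ ∈ f.support, Finset.Iic γ ⊆ B) :
    fN2 (f * b) = ∑ β ∈ B, ((ffac β : ℝ))⁻¹ * FQ (SS f b β) (tco f b β) := by
  rw [fock_L f b B hB, fock_R f b B]
  congr 1
  exact sum_rot _ _ _ _ _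

lemma coeff_pderiv (f : MvPolynomial (Fin d) ℂ) (j : Fin d) (γ : Fin d →₀ ℕ) :
    (pderiv j f).coeff γ = f.coeff (γ + Finsupp.single j 1) * ((γ j : ℂ) + 1) := by
  conv_lhs => rw [f.as_sum, map_sum]
  rw [MvPolynomial.coeff_sum]
  rw [Finset.sum_eq_single (γ + Finsupp.single j 1)
    (f := fun s => ((pderiv j) ((monomial s) (f.coeff s))).coeff γ)]
  · rw [pderiv_monomial, MvPolynomial.coeff_monomial]
    have h1 : γ + Finsupp.single j 1 - Finsupp.single j 1 = γ := add_tsub_cancel_right _ _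
    rw [if_pos h1]
    have h2 : ((γ + Finsupp.single j 1 : Fin d →₀ ℕ)) j = γ j + 1 := by
      simp
    rw [h2]
    push_cast
    ring
  · intro s _ hne
    rw [pderiv_monomial, MvPolynomial.coeff_monomial]
    by_cases hc : s - Finsupp.single j 1 = γ
    · rw [if_pos hc]
      have hsj : s j = 0 := by
        by_contra hsj
        have hts : Finsupp.single j 1 ≤ s := by
          rw [Finsupp.single_le_iff]; omega
        rw [tsub_eq_iff_eq_add_of_le hts] at hc
        exact hne (by rw [hc])
      rw [hsj]
      simp
    · rw [if_neg hc]
  · intro hnin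
    rw [MvPolynomial.notMem_support_iff.1 hnin]
    simp

lemma tco_superset (f b : MvPolynomial (Fin d) ℂ) (β δ : Fin d →₀ ℕ) {S : Finset (Fin d →₀ ℕ)}
    (hS : f.support ⊆ S) :
    tco f b β δ = ∑ γ ∈ S, (if β ≤ γ then
      (starRingEnd ℂ) (f.coeff γ) * b.coeff (δ + (γ - β)) *
        (((ffac γ : ℂ) * (ffac (δ + (γ - β)) : ℂ)) / ((ffac (γ - β) : ℂ) * (ffac δ : ℂ)))
      else 0) := by
  apply Finset.sum_subset hS
  intro γ _ hγ
  rw [MvPolynomial.notMem_support_iff.1 hγ]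
  simp

lemma tco_shift (f b : MvPolynomial (Fin d) ℂ) (j : Fin d) (β δ : Fin d →₀ ℕ) :
    tco (pderiv j f) b β δ = tco f b (β + Finsupp.single j 1) δ := by
  classical
  set e := Finsupp.single j 1 with he
  set S : Finset (Fin d →₀ ℕ) := f.support.image (fun s => s - e) with hSdef
  have hsub : (pderiv j f).support ⊆ S := by
    intro γ hγ
    have h1 : f.coeff (γ + e) ≠ 0 := by
      intro h0
      apply MvPolynomial.mem_support_iff.1 hγ
      rw [coeff_pderiv, h0, zero_mul]
    exact Finset.mem_image.2 ⟨γ + e, MvPolynomial.mem_support_iff.2 h1, add_tsub_cancel_right _ _⟩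
  rw [tco_superset (pderiv j f) b β δ hsub]
  unfold tco
  -- restrict both sums to matched subsets
  rw [show (∑ γ ∈ S, (if β ≤ γ then
      (starRingEnd ℂ) ((pderiv j f).coeff γ) * b.coeff (δ + (γ - β)) *
        (((ffac γ : ℂ) * (ffac (δ + (γ - β)) : ℂ)) / ((ffac (γ - β) : ℂ) * (ffac δ : ℂ)))
      else 0))
    = ∑ γ ∈ S.filter (fun γ => γ + e ∈ f.support), (if β ≤ γ then
      (starRingEnd ℂ) ((pderiv j f).coeff γ) * b.coeff (δ + (γ - β)) *
        (((ffac γ : ℂ) * (ffac (δ + (γ - β)) : ℂ)) / ((ffac (γ - β) : ℂ) * (ffac δ : ℂ)))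
      else 0) from by
    symm
    apply Finset.sum_subset (Finset.filter_subset _ _)
    intro γ _ hγ
    have : γ + e ∉ f.support := by
      intro hmem
      exact hγ (Finset.mem_filter.2 ⟨‹γ ∈ S›, hmem⟩)
    rw [coeff_pderiv, MvPolynomial.notMem_support_iff.1 this]
    simp]
  rw [show (∑ γ ∈ f.support, (if β + e ≤ γ then
      (starRingEnd ℂ) (f.coeff γ) * b.coeff (δ + (γ - (β + e))) *
        (((ffac γ : ℂ) * (ffac (δ + (γ - (β + e))) : ℂ)) / ((ffac (γ - (β + e)) : ℂ) * (ffac δ : ℂ)))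
      else 0))
    = ∑ γ ∈ f.support.filter (fun γ => e ≤ γ), (if β + e ≤ γ then
      (starRingEnd ℂ) (f.coeff γ) * b.coeff (δ + (γ - (β + e))) *
        (((ffac γ : ℂ) * (ffac (δ + (γ - (β + e))) : ℂ)) / ((ffac (γ - (β + e)) : ℂ) * (ffac δ : ℂ)))
      else 0) from by
    symm
    apply Finset.sum_subset (Finset.filter_subset _ _)
    intro γ hγ hγ2
    have : ¬ (β + e ≤ γ) := by
      intro hle
      exact hγ2 (Finset.mem_filter.2 ⟨hγ, le_trans le_add_self hle⟩)
    rw [if_neg this]]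
  apply Finset.sum_nbij' (fun γ => γ + e) (fun γ => γ - e)
  · intro γ hγ
    obtain ⟨h1, h2⟩ := Finset.mem_filter.1 hγ
    exact Finset.mem_filter.2 ⟨h2, le_add_self⟩
  · intro γ hγ
    obtain ⟨h1, h2⟩ := Finset.mem_filter.1 hγ
    refine Finset.mem_filter.2 ⟨Finset.mem_image.2 ⟨γ, h1, rfl⟩, ?_⟩
    rw [tsub_add_cancel_of_le h2]
    exact h1
  · intro γ _; exact add_tsub_cancel_right _ _
  · intro γ hγ
    exact tsub_add_cancel_of_le (Finset.mem_filter.1 hγ).2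
  · intro γ hγ
    obtain ⟨h1, h2⟩ := Finset.mem_filter.1 hγ
    have hcond : (β ≤ γ) ↔ (β + e ≤ γ + e) := by
      constructor
      · intro h; exact add_le_add_left h e
      · intro h
        rw [Finsupp.le_def] at h ⊢
        intro i
        have := h i
        simp only [Finsupp.add_apply] at this
        omega
    by_cases h : β ≤ γ
    · rw [if_pos h, if_pos (hcond.1 h)]
      have i1 : γ + e - (β + e) = γ - β := by
        ext i
        simp only [Finsupp.tsub_apply, Finsupp.add_apply]
        omega
      rw [i1, coeff_pderiv]
      have i2 : (ffac (γ + e) : ℂ) = ((γ j : ℂ) + 1) * (ffac γ : ℂ) := by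
        rw [he, ffac_add_single]
        push_cast
        ring
      rw [i2, map_mul]
      have i3 : (starRingEnd ℂ) ((γ j : ℂ) + 1) = ((γ j : ℂ) + 1) := by
        rw [map_add, map_one, map_natCast]
      rw [i3]
      ring
    · rw [if_neg h, if_neg (fun hc => h (hcond.2 hc))]

lemma apply_le_degree (γ : Fin d →₀ ℕ) (j : Fin d) : γ j ≤ γ.degree := by
  by_cases h : j ∈ γ.support
  · exact Finset.single_le_sum (fun i _ => Nat.zero_le _) h
  · rw [Finsupp.notMem_support_iff.1 h]
    exact Nat.zero_le _

lemma fock_key (f b : MvPolynomial (Fin d) ℂ) (m : ℕ) (hf : f.IsHomogeneous m) (j : Fin d) :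
    fN2 (pderiv j f * b) ≤ (m : ℝ) * fN2 (f * b) := by
  classical
  set e := Finsupp.single j 1 with he
  set B' : Finset (Fin d →₀ ℕ) := (pderiv j f).support.biUnion Finset.Iic with hB'def
  set B : Finset (Fin d →₀ ℕ) := f.support.biUnion Finset.Iic with hBdef
  set B2 : Finset (Fin d →₀ ℕ) := B'.image (fun β => β + e) with hB2def
  have hB' : ∀ γ ∈ (pderiv j f).support, Finset.Iic γ ⊆ B' :=
    fun γ hγ => Finset.subset_biUnion_of_mem _ hγ
  have hBtot : ∀ γ ∈ f.support, Finset.Iic γ ⊆ B ∪ B2 :=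
    fun γ hγ => subset_trans (Finset.subset_biUnion_of_mem _ hγ) Finset.subset_union_left
  rw [fock_id (pderiv j f) b B' hB', fock_id f b (B ∪ B2) hBtot]
  have stepshift : ∀ β ∈ B', ((ffac β : ℝ))⁻¹ * FQ (SS (pderiv j f) b β) (tco (pderiv j f) b β)
      = ((ffac β : ℝ))⁻¹ * FQ (SS f b (β + e)) (tco f b (β + e)) := by
    intro β _
    congr 1
    have hfun : tco (pderiv j f) b β = tco f b (β + e) := funext (tco_shift f b j β)
    rw [← hfun]
    apply FQ_congr
    · intro δ hδ; exact tco_eq_zero_of_not_mem_SS hδ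
    · intro δ hδ; rw [hfun]; exact tco_eq_zero_of_not_mem_SS hδ
  rw [Finset.sum_congr rfl stepshift]
  have hinj : Function.Injective (fun β : Fin d →₀ ℕ => β + e) := add_left_injective e
  rw [show ∑ β ∈ B', ((ffac β : ℝ))⁻¹ * FQ (SS f b (β + e)) (tco f b (β + e))
      = ∑ β2 ∈ B2, ((ffac (β2 - e) : ℝ))⁻¹ * FQ (SS f b β2) (tco f b β2) from by
    rw [hB2def, Finset.sum_image (fun x _ y _ h => hinj h)]
    refine Finset.sum_congr rfl fun β _ => ?_
    rw [add_tsub_cancel_right]]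
  have perterm : ∀ β2 ∈ B2, ((ffac (β2 - e) : ℝ))⁻¹ * FQ (SS f b β2) (tco f b β2)
      ≤ (m : ℝ) * (((ffac β2 : ℝ))⁻¹ * FQ (SS f b β2) (tco f b β2)) := by
    intro β2 hβ2
    obtain ⟨β, hβ, rfl⟩ := Finset.mem_image.1 hβ2
    by_cases hex : ∃ γ ∈ f.support, β + e ≤ γ
    · obtain ⟨γ, hγ, hle⟩ := hex
      have hj : (β + e) j ≤ m := by
        have h1 : (β + e) j ≤ γ j := Finsupp.le_def.1 hle j
        have h2 : γ j ≤ γ.degree := apply_le_degree γ j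
        have h3 : γ.degree = m := by
          rw [Finsupp.degree_eq_weight_one]
          exact hf (MvPolynomial.mem_support_iff.1 hγ)
        omega
      have hejapp : ((β + e : Fin d →₀ ℕ)) j = β j + 1 := by
        simp [he]
      have hffac : (ffac (β + e) : ℝ) = ((β + e : Fin d →₀ ℕ) j : ℝ) * (ffac (β + e - e) : ℝ) := by
        rw [add_tsub_cancel_right, he, ffac_add_single]
        rw [show ((β + Finsupp.single j 1 : Fin d →₀ ℕ)) j = β j + 1 from by simp]
        push_cast
        ring
      have hjpos : 0 < (((β + e : Fin d →₀ ℕ)) j : ℝ) := by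
        rw [hejapp]; positivity
      have hffacpos : (0:ℝ) < ffac (β + e - e) := by exact_mod_cast ffac_pos _
      have hFQ : 0 ≤ FQ (SS f b (β + e)) (tco f b (β + e)) := FQ_nonneg _ _
      have hinv : ((ffac (β + e - e) : ℝ))⁻¹ = (((β + e : Fin d →₀ ℕ)) j : ℝ) * ((ffac (β + e) : ℝ))⁻¹ := by
        rw [hffac, mul_inv, ← mul_assoc, mul_inv_cancel₀ hjpos.ne', one_mul]
      rw [hinv, mul_assoc]
      apply mul_le_mul_of_nonneg_right _ (by positivity)
      exact_mod_cast hj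
    · push_neg at hex
      have hzero : tco f b (β + e) = fun _ => 0 := by
        funext δ
        apply Finset.sum_eq_zero
        intro γ hγ
        rw [if_neg (hex γ hγ)]
      rw [hzero]
      have hz0 : ∀ S : Finset (Fin d →₀ ℕ), FQ S (fun _ => (0:ℂ)) = 0 := by
        intro S; unfold FQ; simp
      simp [hz0]
  calc ∑ β2 ∈ B2, ((ffac (β2 - e) : ℝ))⁻¹ * FQ (SS f b β2) (tco f b β2)
      ≤ ∑ β2 ∈ B2, (m : ℝ) * (((ffac β2 : ℝ))⁻¹ * FQ (SS f b β2) (tco f b β2)) :=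
        Finset.sum_le_sum perterm
    _ ≤ ∑ β2 ∈ B ∪ B2, (m : ℝ) * (((ffac β2 : ℝ))⁻¹ * FQ (SS f b β2) (tco f b β2)) := by
        apply Finset.sum_le_sum_of_subset_of_nonneg Finset.subset_union_right
        intro β _ _
        have h1 : (0:ℝ) ≤ ((ffac β : ℝ))⁻¹ := by positivity
        have h2 := FQ_nonneg (SS f b β) (tco f b β)
        positivity
    _ = (m : ℝ) * ∑ β ∈ B ∪ B2, ((ffac β : ℝ))⁻¹ * FQ (SS f b β) (tco f b β) := by
        rw [Finset.mul_sum]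



lemma degree_add' (α β : Fin d →₀ ℕ) : (α + β).degree = α.degree + β.degree := by
  simp [Finsupp.degree_eq_weight_one, map_add]

lemma degree_single' (j : Fin d) : (Finsupp.single j 1 : Fin d →₀ ℕ).degree = 1 := by
  simp

lemma isHomog_pderiv {f : MvPolynomial (Fin d) ℂ} {m : ℕ} (hf : f.IsHomogeneous m) (j : Fin d) :
    (pderiv j f).IsHomogeneous (m - 1) := by
  intro γ hγ
  rw [coeff_pderiv] at hγ
  have h1 : f.coeff (γ + Finsupp.single j 1) ≠ 0 := fun h0 => hγ (by rw [h0, zero_mul])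
  have h2 := hf h1
  have hw : (Finsupp.weight (1 : Fin d → ℕ)) = Finsupp.degree := by
    rw [Finsupp.degree_eq_weight_one]; rfl
  rw [hw] at h2 ⊢
  rw [degree_add', degree_single'] at h2
  omega

lemma mdeg_eq_degree' (α : Fin d →₀ ℕ) : mdeg α = α.degree := rfl

lemma da_fock {p : MvPolynomial (Fin d) ℂ} {N : ℕ} (hp : p.IsHomogeneous N) :
    daNormSq p = fN2 p / (N.factorial : ℝ) := by
  unfold daNormSq fN2
  rw [Finset.sum_div]
  refine Finset.sum_congr rfl fun α hα => ?_
  have hdeg : mdeg α = N := by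
    rw [mdeg_eq_degree', Finsupp.degree_eq_weight_one]
    exact hp (MvPolynomial.mem_support_iff.1 hα)
  rw [Complex.sq_norm]
  unfold daW
  rw [hdeg]
  unfold ffac
  ring

lemma daNormSq_nonneg (p : MvPolynomial (Fin d) ℂ) : 0 ≤ daNormSq p := by
  apply Finset.sum_nonneg
  intro α _
  have h1 : (0:ℝ) ≤ ‖p.coeff α‖ ^ 2 := by positivity
  have h2 : (0:ℝ) ≤ daW α := by unfold daW; positivity
  exact mul_nonneg h1 h2

lemma daNormSq_zero : daNormSq (0 : MvPolynomial (Fin d) ℂ) = 0 := by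
  unfold daNormSq; simp

lemma GW (F b : MvPolynomial (Fin d) ℂ) {m ℓ : ℕ} (hF : F.IsHomogeneous m)
    (hb : b.IsHomogeneous ℓ) (j : Fin d) :
    daNormSq (b * pderiv j F) ≤ ((m : ℝ) * ((ℓ : ℝ) + m)) * daNormSq (b * F) := by
  rcases Nat.eq_zero_or_pos m with hm | hm
  · subst hm
    have hF0 : pderiv j F = 0 := by
      apply MvPolynomial.ext
      intro γ
      rw [coeff_pderiv, MvPolynomial.coeff_zero]
      have h0 : F.coeff (γ + Finsupp.single j 1) = 0 := by
        apply hF.coeff_eq_zero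
        rw [degree_add', degree_single']
        omega
      rw [h0, zero_mul]
    rw [hF0, mul_zero, daNormSq_zero]
    push_cast
    have := daNormSq_nonneg (b * F)
    nlinarith
  · have h1 : (b * pderiv j F).IsHomogeneous (ℓ + (m - 1)) := hb.mul (isHomog_pderiv hF j)
    have h2 : (b * F).IsHomogeneous (ℓ + m) := hb.mul hF
    rw [da_fock h1, da_fock h2]
    have key : fN2 (b * pderiv j F) ≤ (m : ℝ) * fN2 (b * F) := by
      rw [mul_comm b (pderiv j F), mul_comm b F]
      exact fock_key F b m hF j
    have hpos1 : (0:ℝ) < ((ℓ + (m-1)).factorial : ℝ) := by exact_mod_cast Nat.factorial_pos _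
    have hpos2 : (0:ℝ) < ((ℓ + m).factorial : ℝ) := by exact_mod_cast Nat.factorial_pos _
    have hfacteq : ((ℓ + m).factorial : ℝ) = ((ℓ : ℝ) + m) * ((ℓ + (m-1)).factorial : ℝ) := by
      have hsucc : ℓ + m = (ℓ + (m - 1)) + 1 := by omega
      rw [hsucc, Nat.factorial_succ]
      push_cast [Nat.cast_sub hm]
      ring
    have heq : ((m:ℝ) * ((ℓ:ℝ) + m)) * (fN2 (b*F) / ((ℓ+m).factorial : ℝ))
        = ((m:ℝ) * fN2 (b*F)) / ((ℓ + (m-1)).factorial : ℝ) := by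
      rw [hfacteq]
      have hlm : (0:ℝ) < (ℓ:ℝ) + m := by positivity
      field_simp
    rw [heq]
    gcongr

-- ================== DA basics ==================

lemma daW_nonneg (α : Fin d →₀ ℕ) : 0 ≤ daW α := by unfold daW; positivity

lemma daNormSq_superset {p : MvPolynomial (Fin d) ℂ} {S : Finset (Fin d →₀ ℕ)}
    (hS : p.support ⊆ S) :
    daNormSq p = ∑ α ∈ S, ‖p.coeff α‖ ^ 2 * daW α := by
  apply Finset.sum_subset hS
  intro α _ hα
  rw [MvPolynomial.notMem_support_iff.1 hα]
  simp

lemma daInner_superset {p q : MvPolynomial (Fin d) ℂ} {S : Finset (Fin d →₀ ℕ)}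
    (hS : p.support ∪ q.support ⊆ S) :
    daInner p q = ∑ α ∈ S, (starRingEnd ℂ) (p.coeff α) * q.coeff α * (daW α : ℂ) := by
  apply Finset.sum_subset hS
  intro α _ hα
  have h1 : α ∉ p.support := fun h => hα (Finset.mem_union_left _ h)
  rw [MvPolynomial.notMem_support_iff.1 h1]
  simp

lemma daNormSq_add_expand (p q : MvPolynomial (Fin d) ℂ) :
    daNormSq (p + q) = daNormSq p + daNormSq q + 2 * (daInner p q).re := by
  classical
  set S := p.support ∪ q.support ∪ (p+q).support with hSdef
  have hp : p.support ⊆ S := subset_trans Finset.subset_union_left Finset.subset_union_left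
  have hq : q.support ⊆ S := subset_trans Finset.subset_union_right Finset.subset_union_left
  have hpq : (p+q).support ⊆ S := Finset.subset_union_right
  have hin : p.support ∪ q.support ⊆ S := Finset.union_subset hp hq
  rw [daNormSq_superset hp, daNormSq_superset hq, daNormSq_superset hpq, daInner_superset hin]
  rw [Complex.re_sum, Finset.mul_sum, ← Finset.sum_add_distrib, ← Finset.sum_add_distrib]
  refine Finset.sum_congr rfl fun α _ => ?_
  rw [MvPolynomial.coeff_add]
  rw [Complex.sq_norm, Complex.sq_norm, Complex.sq_norm, Complex.normSq_add]
  have hre : ((starRingEnd ℂ) (p.coeff α) * q.coeff α * ((daW α : ℝ) : ℂ)).re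
      = (p.coeff α * (starRingEnd ℂ) (q.coeff α)).re * daW α := by
    have hc : (starRingEnd ℂ) (p.coeff α) * q.coeff α
        = (starRingEnd ℂ) (p.coeff α * (starRingEnd ℂ) (q.coeff α)) := by
      rw [map_mul, Complex.conj_conj]
    rw [hc]
    simp [Complex.mul_re]
  rw [hre]
  ring

lemma daNormSq_smul (c : ℂ) (p : MvPolynomial (Fin d) ℂ) :
    daNormSq (c • p) = ‖c‖ ^ 2 * daNormSq p := by
  have hs : (c • p).support ⊆ p.support := MvPolynomial.support_smul
  rw [daNormSq_superset hs]
  unfold daNormSq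
  rw [Finset.mul_sum]
  refine Finset.sum_congr rfl fun α _ => ?_
  rw [MvPolynomial.coeff_smul, smul_eq_mul, norm_mul, mul_pow]
  ring

lemma daNormSq_sum_le {ι : Type*} (s : Finset ι) (P : ι → MvPolynomial (Fin d) ℂ) :
    daNormSq (∑ i ∈ s, P i) ≤ (s.card : ℝ) * ∑ i ∈ s, daNormSq (P i) := by
  classical
  set S := s.biUnion (fun i => (P i).support) with hSdef
  have hsupp : (∑ i ∈ s, P i).support ⊆ S := by
    intro α hα
    rw [MvPolynomial.mem_support_iff, MvPolynomial.coeff_sum] at hα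
    obtain ⟨i, hi, hne⟩ := Finset.exists_ne_zero_of_sum_ne_zero hα
    rw [hSdef]
    exact Finset.mem_biUnion.2 ⟨i, hi, MvPolynomial.mem_support_iff.2 hne⟩
  rw [daNormSq_superset hsupp]
  have step : ∀ α ∈ S, ‖(∑ i ∈ s, P i).coeff α‖ ^ 2 * daW α
      ≤ (s.card : ℝ) * ∑ i ∈ s, ‖(P i).coeff α‖ ^ 2 * daW α := by
    intro α _
    rw [Finset.mul_sum]
    have h1 : ‖(∑ i ∈ s, P i).coeff α‖ ≤ ∑ i ∈ s, ‖(P i).coeff α‖ := by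
      rw [MvPolynomial.coeff_sum]
      exact norm_sum_le _ _
    have h2 : ‖(∑ i ∈ s, P i).coeff α‖ ^ 2
        ≤ (∑ i ∈ s, ‖(P i).coeff α‖) ^ 2 := by
      apply pow_le_pow_left₀ (norm_nonneg _) h1
    have h3 : (∑ i ∈ s, ‖(P i).coeff α‖) ^ 2
        ≤ (s.card : ℝ) * ∑ i ∈ s, ‖(P i).coeff α‖ ^ 2 := by
      have := Finset.sum_mul_sq_le_sq_mul_sq s (fun _ => (1:ℝ)) (fun i => ‖(P i).coeff α‖)
      simp only [one_mul, one_pow] at this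
      calc (∑ i ∈ s, ‖(P i).coeff α‖) ^ 2
          ≤ (∑ _i ∈ s, (1:ℝ)) * ∑ i ∈ s, ‖(P i).coeff α‖ ^ 2 := this
        _ = (s.card : ℝ) * ∑ i ∈ s, ‖(P i).coeff α‖ ^ 2 := by
            rw [Finset.sum_const, nsmul_eq_mul, mul_one]
    calc ‖(∑ i ∈ s, P i).coeff α‖ ^ 2 * daW α
        ≤ ((s.card : ℝ) * ∑ i ∈ s, ‖(P i).coeff α‖ ^ 2) * daW α := by
          apply mul_le_mul_of_nonneg_right (le_trans h2 h3) (daW_nonneg α)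
      _ = ∑ i ∈ s, (s.card : ℝ) * (‖(P i).coeff α‖ ^ 2 * daW α) := by
          simp only [Finset.mul_sum, Finset.sum_mul]
          refine Finset.sum_congr rfl fun i _ => by ring
  calc ∑ α ∈ S, ‖(∑ i ∈ s, P i).coeff α‖ ^ 2 * daW α
      ≤ ∑ α ∈ S, (s.card : ℝ) * ∑ i ∈ s, ‖(P i).coeff α‖ ^ 2 * daW α :=
        Finset.sum_le_sum step
    _ = (s.card : ℝ) * ∑ i ∈ s, ∑ α ∈ S, ‖(P i).coeff α‖ ^ 2 * daW α := by
        rw [← Finset.mul_sum, Finset.sum_comm]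
    _ = (s.card : ℝ) * ∑ i ∈ s, daNormSq (P i) := by
        congr 1
        refine Finset.sum_congr rfl fun i hi => ?_
        have hsub2 : (P i).support ⊆ S := by
          intro α hα
          rw [hSdef]
          exact Finset.mem_biUnion.2 ⟨i, hi, hα⟩
        rw [daNormSq_superset hsub2]

-- homogeneous component lemmas

lemma homogComp_mul {F : MvPolynomial (Fin d) ℂ} {m : ℕ} (hF : F.IsHomogeneous m)
    (a : MvPolynomial (Fin d) ℂ) (N : ℕ) (hm : m ≤ N) :
    MvPolynomial.homogeneousComponent N (a * F)
      = MvPolynomial.homogeneousComponent (N - m) a * F := by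
  classical
  apply MvPolynomial.ext
  intro α
  rw [MvPolynomial.coeff_homogeneousComponent, MvPolynomial.coeff_mul, MvPolynomial.coeff_mul]
  by_cases h : α.degree = N
  · rw [if_pos h]
    refine Finset.sum_congr rfl fun x hx => ?_
    rw [MvPolynomial.coeff_homogeneousComponent]
    by_cases hv : F.coeff x.2 = 0
    · rw [hv, mul_zero, mul_zero]
    · have hdv : x.2.degree = m := by
        rw [Finsupp.degree_eq_weight_one]; exact hF hv
      have hadd : x.1 + x.2 = α := Finset.HasAntidiagonal.mem_antidiagonal.1 hx
      have hdsum : x.1.degree + x.2.degree = N := by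
        rw [← degree_add', hadd, h]
      have hdu : x.1.degree = N - m := by omega
      rw [if_pos hdu]
  · rw [if_neg h]
    symm
    apply Finset.sum_eq_zero
    intro x hx
    rw [MvPolynomial.coeff_homogeneousComponent]
    by_cases hv : F.coeff x.2 = 0
    · rw [hv, mul_zero]
    · have hdv : x.2.degree = m := by
        rw [Finsupp.degree_eq_weight_one]; exact hF hv
      have hadd : x.1 + x.2 = α := Finset.HasAntidiagonal.mem_antidiagonal.1 hx
      have hne : ¬ x.1.degree = N - m := by
        intro hdu
        apply h
        rw [← hadd, degree_add', hdu, hdv]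
        omega
      rw [if_neg hne, zero_mul]

lemma homogComp_of_homog {p : MvPolynomial (Fin d) ℂ} {N : ℕ} (hp : p.IsHomogeneous N) :
    MvPolynomial.homogeneousComponent N p = p := by
  apply MvPolynomial.ext
  intro α
  rw [MvPolynomial.coeff_homogeneousComponent]
  by_cases h : α.degree = N
  · rw [if_pos h]
  · rw [if_neg h]
    exact (hp.coeff_eq_zero h).symm

lemma daNormSq_homogComp_le (N : ℕ) (p : MvPolynomial (Fin d) ℂ) :
    daNormSq (MvPolynomial.homogeneousComponent N p) ≤ daNormSq p := by
  have hs : (MvPolynomial.homogeneousComponent N p).support ⊆ p.support := by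
    intro α hα
    rw [MvPolynomial.mem_support_iff, MvPolynomial.coeff_homogeneousComponent] at hα
    rw [MvPolynomial.mem_support_iff]
    by_cases h : α.degree = N
    · rw [if_pos h] at hα; exact hα
    · rw [if_neg h] at hα; exact absurd rfl hα
  rw [daNormSq_superset hs]
  apply Finset.sum_le_sum
  intro α _
  rw [MvPolynomial.coeff_homogeneousComponent]
  by_cases h : α.degree = N
  · rw [if_pos h]
  · rw [if_neg h]
    have h1 : (0:ℝ) ≤ ‖p.coeff α‖ ^ 2 * daW α := by
      have := daW_nonneg (d := d) α
      positivity
    simpa using h1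

-- =============== vector-valued lemmas ===============

lemma vNormSq_nonneg' {r : ℕ} (p : Fin r → MvPolynomial (Fin d) ℂ) : 0 ≤ vNormSq p :=
  Finset.sum_nonneg fun t _ => daNormSq_nonneg _

lemma vNorm_sq' {r : ℕ} (p : Fin r → MvPolynomial (Fin d) ℂ) : vNorm p ^ 2 = vNormSq p :=
  Real.sq_sqrt (vNormSq_nonneg' p)

lemma vNormSq_add_expand {r : ℕ} (p q : Fin r → MvPolynomial (Fin d) ℂ) :
    vNormSq (p + q) = vNormSq p + vNormSq q + 2 * (vInner p q).re := by
  unfold vNormSq vInner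
  rw [Complex.re_sum, Finset.mul_sum, ← Finset.sum_add_distrib, ← Finset.sum_add_distrib]
  refine Finset.sum_congr rfl fun t _ => ?_
  have hthis := daNormSq_add_expand (p t) (q t)
  simpa [Pi.add_apply] using hthis

lemma vNormSq_le_of_orth {r : ℕ} {x y : Fin r → MvPolynomial (Fin d) ℂ}
    (h : vInner x y = 0) : vNormSq y ≤ vNormSq (x + y) := by
  rw [vNormSq_add_expand, h]
  have := vNormSq_nonneg' x
  simp only [Complex.zero_re, mul_zero, add_zero]
  linarith

lemma vNormSq_smul' {r : ℕ} (c : ℂ) (p : Fin r → MvPolynomial (Fin d) ℂ) :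
    vNormSq (fun t => c • p t) = ‖c‖ ^ 2 * vNormSq p := by
  unfold vNormSq
  rw [Finset.mul_sum]
  exact Finset.sum_congr rfl fun t _ => daNormSq_smul c (p t)

lemma vNormSq_sum_le' {r k : ℕ} (P : Fin k → (Fin r → MvPolynomial (Fin d) ℂ)) :
    vNormSq (fun t => ∑ i, P i t) ≤ (k:ℝ) * ∑ i, vNormSq (P i) := by
  unfold vNormSq
  calc ∑ t, daNormSq (∑ i, P i t)
      ≤ ∑ t, ((Finset.univ.card (α := Fin k) : ℝ) * ∑ i, daNormSq (P i t)) :=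
        Finset.sum_le_sum fun t _ => daNormSq_sum_le Finset.univ (fun i => P i t)
    _ = (k:ℝ) * ∑ i, ∑ t, daNormSq (P i t) := by
        rw [← Finset.mul_sum, Finset.sum_comm]
        congr 2
        simp
    _ = (k:ℝ) * ∑ i, ∑ t, daNormSq (P i t) := rfl

lemma sq_sum_ge {k : ℕ} (x : Fin k → ℝ) (hx : ∀ i, 0 ≤ x i) :
    ∑ i, (x i)^2 ≤ (∑ i, x i)^2 := by
  calc ∑ i, (x i)^2 ≤ ∑ i, x i * ∑ j, x j := by
        apply Finset.sum_le_sum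
        intro i _
        rw [sq]
        exact mul_le_mul_of_nonneg_left
          (Finset.single_le_sum (fun j _ => hx j) (Finset.mem_univ i)) (hx i)
    _ = (∑ i, x i)^2 := by rw [← Finset.sum_mul, sq]

end Stmt15Aux

open Stmt15Aux in
/-- if `f_1,…,f_k` is a stable generating set of homogeneous degree-`m`
elements of `M ⊆ H²_d ⊗ ℂ^r` with constant `C`, then there is `C'` such that for all
`n ≥ m`: for `h ∈ M_{n+1}`, the component of `Z_j^* h = (n+1)⁻¹ ∂_j h` orthogonal to
`M_n` has norm at most `C'(n+1)^{-1/2} ‖h‖`; that is,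
`‖P_n Z_j^* (E_{n+1} - P_{n+1}E_{n+1})‖ ≤ C'(n+1)^{-1/2}`. -/
theorem stmt15 (d r k m : ℕ) (Cst : ℝ)
    (f : Fin k → (Fin r → MvPolynomial (Fin d) ℂ))
    (hfhom : ∀ i, vHomog (f i) m)
    (hstable : ∀ (n : ℕ),
      ∀ h ∈ Submodule.span (MvPolynomial (Fin d) ℂ) (Set.range f), vHomog h n →
        ∃ a : Fin k → MvPolynomial (Fin d) ℂ,
          h = ∑ i, a i • f i ∧ ∑ i, vNorm (a i • f i) ≤ Cst * vNorm h) :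
    ∃ C' : ℝ, 0 ≤ C' ∧ ∀ n, m ≤ n → ∀ j : Fin d,
      ∀ h ∈ Submodule.span (MvPolynomial (Fin d) ℂ) (Set.range f), vHomog h (n + 1) →
        ∀ u v : Fin r → MvPolynomial (Fin d) ℂ,
          u ∈ Submodule.span (MvPolynomial (Fin d) ℂ) (Set.range f) →
          vHomog u n → vHomog v n →
          (∀ h' ∈ Submodule.span (MvPolynomial (Fin d) ℂ) (Set.range f),
            vHomog h' n → vInner h' v = 0) →
          (fun t => (((n : ℂ) + 1))⁻¹ • pderiv j (h t)) = u + v →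
          vNormSq v ≤ C' ^ 2 / ((n : ℝ) + 1) * vNormSq h := by
  classical
  refine ⟨Real.sqrt ((k : ℝ) * m) * max Cst 0, by positivity, ?_⟩
  intro n hn j h hspan hhom u v huspan huhom hvhom horth heq
  obtain ⟨a, ha, hnorm⟩ := hstable (n+1) h hspan hhom
  set ℓ : ℕ := n + 1 - m with hℓ
  have hℓm : ℓ + m = n + 1 := by omega
  set b : Fin k → MvPolynomial (Fin d) ℂ :=
    fun i => MvPolynomial.homogeneousComponent ℓ (a i) with hbdef
  have hbhom : ∀ i, (b i).IsHomogeneous ℓ :=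
    fun i => MvPolynomial.homogeneousComponent_isHomogeneous ℓ (a i)
  have hbf : ∀ i t, b i * f i t = MvPolynomial.homogeneousComponent (n+1) (a i * f i t) := by
    intro i t
    have hstep : (n+1) - m = ℓ := by omega
    rw [homogComp_mul (hfhom i t) (a i) (n+1) (by omega), hstep]
  have hsum : ∀ t, h t = ∑ i, b i * f i t := by
    intro t
    have h2 : h t = ∑ i, a i * f i t := by
      have hthis := congrFun ha t
      simpa [Finset.sum_apply, smul_eq_mul] using hthis
    have h1 : h t = MvPolynomial.homogeneousComponent (n+1) (h t) :=
      (homogComp_of_homog (hhom t)).symm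
    calc h t = MvPolynomial.homogeneousComponent (n+1) (h t) := h1
      _ = MvPolynomial.homogeneousComponent (n+1) (∑ i, a i * f i t) := by rw [← h2]
      _ = ∑ i, MvPolynomial.homogeneousComponent (n+1) (a i * f i t) := map_sum _ _ _
      _ = ∑ i, b i * f i t := by
          refine Finset.sum_congr rfl fun i _ => ?_
          rw [hbf]
  set h' : Fin r → MvPolynomial (Fin d) ℂ :=
    fun t => (((n : ℂ) + 1))⁻¹ • ∑ i, (MvPolynomial.pderiv j (b i)) * f i t with hh'
  set w : Fin r → MvPolynomial (Fin d) ℂ :=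
    fun t => (((n : ℂ) + 1))⁻¹ • ∑ i, b i * MvPolynomial.pderiv j (f i t) with hwdef
  have hleib : (fun t => (((n : ℂ) + 1))⁻¹ • MvPolynomial.pderiv j (h t)) = h' + w := by
    funext t
    have hthis : MvPolynomial.pderiv j (h t)
        = (∑ i, (MvPolynomial.pderiv j (b i)) * f i t)
          + ∑ i, b i * MvPolynomial.pderiv j (f i t) := by
      rw [hsum t, map_sum, ← Finset.sum_add_distrib]
      exact Finset.sum_congr rfl fun i _ => MvPolynomial.pderiv_mul
    show (((n : ℂ) + 1))⁻¹ • MvPolynomial.pderiv j (h t) = h' t + w t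
    rw [hthis, smul_add]
  have hspan' : h' ∈ Submodule.span (MvPolynomial (Fin d) ℂ) (Set.range f) := by
    have hsum' : (fun t => ∑ i, (MvPolynomial.pderiv j (b i)) * f i t)
        ∈ Submodule.span (MvPolynomial (Fin d) ℂ) (Set.range f) := by
      have hthis : (fun t => ∑ i, (MvPolynomial.pderiv j (b i)) * f i t)
          = ∑ i, (MvPolynomial.pderiv j (b i)) • f i := by
        funext t
        rw [Finset.sum_apply]
        exact Finset.sum_congr rfl fun i _ => rfl
      rw [hthis]
      exact Submodule.sum_mem _ fun i _ =>
        Submodule.smul_mem _ _ (Submodule.subset_span ⟨i, rfl⟩)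
    have hCsmul : h' = (MvPolynomial.C (((n : ℂ) + 1)⁻¹) : MvPolynomial (Fin d) ℂ)
        • (fun t => ∑ i, (MvPolynomial.pderiv j (b i)) * f i t) := by
      funext t
      show (((n : ℂ) + 1))⁻¹ • (∑ i, (MvPolynomial.pderiv j (b i)) * f i t)
        = MvPolynomial.C (((n : ℂ) + 1)⁻¹) * (∑ i, (MvPolynomial.pderiv j (b i)) * f i t)
      rw [MvPolynomial.smul_eq_C_mul]
    rw [hCsmul]
    exact Submodule.smul_mem _ _ hsum'
  have hhomh' : vHomog h' n := by
    intro t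
    have hsumhom : (∑ i, (MvPolynomial.pderiv j (b i)) * f i t).IsHomogeneous n := by
      apply MvPolynomial.IsHomogeneous.sum
      intro i _
      have h1 : (MvPolynomial.pderiv j (b i)).IsHomogeneous (ℓ - 1) :=
        isHomog_pderiv (hbhom i) j
      have h2 := h1.mul (hfhom i t)
      have h3 : ℓ - 1 + m = n := by omega
      rw [h3] at h2
      exact h2
    show ((((n : ℂ) + 1))⁻¹ • (∑ i, (MvPolynomial.pderiv j (b i)) * f i t)).IsHomogeneous n
    rw [MvPolynomial.smul_eq_C_mul]
    have hC : (MvPolynomial.C (((n : ℂ) + 1)⁻¹) : MvPolynomial (Fin d) ℂ).IsHomogeneous 0 :=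
      MvPolynomial.isHomogeneous_C _ _
    have := hC.mul hsumhom
    simpa using this
  have horth' : vInner (u - h') v = 0 :=
    horth (u - h') (Submodule.sub_mem _ huspan hspan')
      (fun t => ((huhom t).sub (hhomh' t)))
  have hw_eq : w = (u - h') + v := by
    have h1 : h' + w = u + v := by rw [← hleib, heq]
    calc w = (h' + w) - h' := by abel
      _ = (u + v) - h' := by rw [h1]
      _ = (u - h') + v := by abel
  have hvw : vNormSq v ≤ vNormSq w := by
    rw [hw_eq]
    exact vNormSq_le_of_orth horth'
  have habs : ‖(((n : ℂ) + 1))⁻¹‖ ^ 2 = (((n:ℝ)+1))⁻¹ ^ 2 := by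
    rw [norm_inv]
    congr 2
    rw [show ((n : ℂ) + 1) = ((n + 1 : ℕ) : ℂ) by push_cast; ring]
    rw [Complex.norm_natCast]
    push_cast; ring
  have hwnorm : vNormSq w
      = (((n:ℝ)+1))⁻¹ ^ 2 * vNormSq (fun t => ∑ i, b i * MvPolynomial.pderiv j (f i t)) := by
    have : vNormSq w = vNormSq (fun t => (((n : ℂ) + 1))⁻¹
        • (fun s => ∑ i, b i * MvPolynomial.pderiv j (f i s)) t) := rfl
    rw [this, vNormSq_smul', habs]
  have hW : vNormSq (fun t => ∑ i, b i * MvPolynomial.pderiv j (f i t))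
      ≤ (k:ℝ) * ∑ i, vNormSq (fun t => b i * MvPolynomial.pderiv j (f i t)) :=
    vNormSq_sum_le' _
  have hcast : ((ℓ:ℝ) + m) = (n:ℝ) + 1 := by
    have := congrArg (fun x : ℕ => (x:ℝ)) hℓm
    push_cast at this
    linarith
  have hGW : ∀ i, vNormSq (fun t => b i * MvPolynomial.pderiv j (f i t))
      ≤ ((m:ℝ) * ((n:ℝ)+1)) * vNormSq (fun t => b i * f i t) := by
    intro i
    unfold vNormSq
    rw [Finset.mul_sum]
    apply Finset.sum_le_sum
    intro t _
    have hthis := GW (f i t) (b i) (hfhom i t) (hbhom i) j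
    rw [hcast] at hthis
    exact hthis
  have hBle : ∀ i, vNormSq (fun t => b i * f i t) ≤ vNormSq (a i • f i) := by
    intro i
    unfold vNormSq
    apply Finset.sum_le_sum
    intro t _
    show daNormSq (b i * f i t) ≤ daNormSq ((a i • f i) t)
    rw [hbf i t]
    exact daNormSq_homogComp_le (n+1) (a i * f i t)
  have hsum2 : ∑ i, vNormSq (fun t => b i * f i t) ≤ ((max Cst 0)^2) * vNormSq h := by
    calc ∑ i, vNormSq (fun t => b i * f i t)
        ≤ ∑ i, vNormSq (a i • f i) := Finset.sum_le_sum fun i _ => hBle i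
      _ = ∑ i, vNorm (a i • f i) ^ 2 := by
          exact Finset.sum_congr rfl fun i _ => (vNorm_sq' _).symm
      _ ≤ (∑ i, vNorm (a i • f i))^2 := sq_sum_ge _ (fun i => Real.sqrt_nonneg _)
      _ ≤ (max Cst 0 * vNorm h)^2 := by
          apply pow_le_pow_left₀ (Finset.sum_nonneg fun i _ => Real.sqrt_nonneg _)
          calc ∑ i, vNorm (a i • f i) ≤ Cst * vNorm h := hnorm
            _ ≤ max Cst 0 * vNorm h :=
              mul_le_mul_of_nonneg_right (le_max_left _ _) (Real.sqrt_nonneg _)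
      _ = (max Cst 0)^2 * vNormSq h := by rw [mul_pow, vNorm_sq']
  have hmain : vNormSq v ≤ (((n:ℝ)+1))⁻¹ ^ 2 *
      ((k:ℝ) * (((m:ℝ) * ((n:ℝ)+1)) * (((max Cst 0)^2) * vNormSq h))) := by
    calc vNormSq v ≤ vNormSq w := hvw
      _ = (((n:ℝ)+1))⁻¹ ^ 2 * vNormSq (fun t => ∑ i, b i * MvPolynomial.pderiv j (f i t)) :=
          hwnorm
      _ ≤ (((n:ℝ)+1))⁻¹ ^ 2 *
          ((k:ℝ) * ∑ i, vNormSq (fun t => b i * MvPolynomial.pderiv j (f i t))) := by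
          apply mul_le_mul_of_nonneg_left hW (by positivity)
      _ ≤ (((n:ℝ)+1))⁻¹ ^ 2 *
          ((k:ℝ) * (((m:ℝ) * ((n:ℝ)+1)) * (((max Cst 0)^2) * vNormSq h))) := by
          apply mul_le_mul_of_nonneg_left _ (by positivity)
          apply mul_le_mul_of_nonneg_left _ (by positivity)
          calc ∑ i, vNormSq (fun t => b i * MvPolynomial.pderiv j (f i t))
              ≤ ∑ i, ((m:ℝ) * ((n:ℝ)+1)) * vNormSq (fun t => b i * f i t) :=
                Finset.sum_le_sum fun i _ => hGW i
            _ = ((m:ℝ) * ((n:ℝ)+1)) * ∑ i, vNormSq (fun t => b i * f i t) := by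
                rw [Finset.mul_sum]
            _ ≤ ((m:ℝ) * ((n:ℝ)+1)) * (((max Cst 0)^2) * vNormSq h) := by
                apply mul_le_mul_of_nonneg_left hsum2 (by positivity)
  have hfinal : (((n:ℝ)+1))⁻¹ ^ 2 *
      ((k:ℝ) * (((m:ℝ) * ((n:ℝ)+1)) * (((max Cst 0)^2) * vNormSq h)))
      = (Real.sqrt ((k : ℝ) * m) * max Cst 0) ^ 2 / ((n : ℝ) + 1) * vNormSq h := by
    rw [mul_pow, Real.sq_sqrt (by positivity)]
    have hne : ((n:ℝ)+1) ≠ 0 := by positivity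
    field_simp
  rw [← hfinal]
  exact hmain

end
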